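/- Let K ≥ 2, N ≥ 1, x : {1,…,N} → {1,…,K} with every category nonempty, and let u ∈ Δ^N have all coordinates strictly positive with u ∈ R_x. Fix k ∈ {1,…,K}. With edge weights log η_{j→ℓ}(u), let m(ℓ) = min(ℓ→k) over simple walks from ℓ to k, and define θ* ∈ Δ by θ*_ℓ = exp(−m(ℓ)) / Σ_{ℓ'} exp(−m(ℓ')); note that θ* depends only on the components u_n with n ∉ I_k, since a simple walk ending at k uses no edge out of k. Then for every family v = (v_n)_{n∈I_k} of points of Δ with strictly positive coordinates, the vector u' obtained from u by replacing u_n with v_n for each n ∈ I_k satisfies: u' ∈ R_x if and only if v_n ∈ Δ_k(θ*) for all n ∈ I_k. -/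

import Mathlib

set_option linter.unreachableTactic false
set_option linter.unusedTactic false
set_option linter.unnecessarySimpa false

noncomputable section

/-- The `ℓ`-th vertex of the probability simplex in `ℝ^K` (standard basis vector). -/
def vtx (K : ℕ) (ℓ : Fin K) : Fin K → ℝ := fun i => if i = ℓ then 1 else 0

/-- The subsimplex `Δ_k(θ)`: convex hull of `{θ} ∪ {V_ℓ : ℓ ≠ k}`. -/
def subsimplex (K : ℕ) (k : Fin K) (θ : Fin K → ℝ) : Set (Fin K → ℝ) :=
  convexHull ℝ (insert θ {z | ∃ ℓ : Fin K, ℓ ≠ k ∧ z = vtx K ℓ})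

/-- The weight of the walk `j 0, j 1, …, j m` for edge weights `w`. -/
def walkWeight (K : ℕ) (w : Fin K → Fin K → ℝ) (m : ℕ) (j : Fin (m + 1) → Fin K) : ℝ :=
  ∑ i : Fin m, w (j i.castSucc) (j i.succ)

/-- The minimum weight over simple walks (pairwise distinct vertices) from `a` to `b`. -/
def minWalk (K : ℕ) (w : Fin K → Fin K → ℝ) (a b : Fin K) : ℝ :=
  sInf {v : ℝ | ∃ (m : ℕ) (j : Fin (m + 1) → Fin K),
    j 0 = a ∧ j (Fin.last m) = b ∧ Function.Injective j ∧ v = walkWeight K w m j}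

lemma subsimplex_ineq {K : ℕ} {k : Fin K} {θ z : Fin K → ℝ}
    (hθ : θ ∈ stdSimplex ℝ (Fin K)) (hz : z ∈ subsimplex K k θ) (ℓ : Fin K) :
    θ ℓ * z k ≤ θ k * z ℓ := by
  have hconv : Convex ℝ {p : Fin K → ℝ | θ ℓ * p k ≤ θ k * p ℓ} := by
    intro p hp q hq a b ha hb hab
    simp only [Set.mem_setOf_eq] at *
    have : a * (θ ℓ * p k) + b * (θ ℓ * q k) ≤ a * (θ k * p ℓ) + b * (θ k * q ℓ) := by
      gcongr
    simp only [Pi.add_apply, Pi.smul_apply, smul_eq_mul]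
    ring_nf
    ring_nf at this
    linarith
  have hsub : insert θ {z | ∃ ℓ' : Fin K, ℓ' ≠ k ∧ z = vtx K ℓ'} ⊆
      {p : Fin K → ℝ | θ ℓ * p k ≤ θ k * p ℓ} := by
    rintro p (rfl | ⟨ℓ', hne, rfl⟩)
    · simp [mul_comm]
    · simp only [Set.mem_setOf_eq, vtx]
      rw [if_neg (Ne.symm hne)]
      have : (0:ℝ) ≤ θ k * if ℓ = ℓ' then (1:ℝ) else 0 := by
        by_cases hh : ℓ = ℓ' <;> simp [hh, hθ.1 k]
      simpa using this
  have := convexHull_min hsub hconv hz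
  exact this

lemma subsimplex_le {K : ℕ} {k : Fin K} {θ z : Fin K → ℝ}
    (hθ : θ ∈ stdSimplex ℝ (Fin K)) (hzΔ : z ∈ stdSimplex ℝ (Fin K))
    (hz : z ∈ subsimplex K k θ) : z k ≤ θ k := by
  have h := fun ℓ => subsimplex_ineq hθ hz ℓ
  have hsum : ∑ ℓ, θ ℓ * z k ≤ ∑ ℓ, θ k * z ℓ := Finset.sum_le_sum fun ℓ _ => h ℓ
  rw [← Finset.sum_mul, ← Finset.mul_sum, hθ.2, hzΔ.2] at hsum
  linarith

lemma mem_subsimplex {K : ℕ} {k : Fin K} {θ z : Fin K → ℝ}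
    (hθ : θ ∈ stdSimplex ℝ (Fin K)) (hzΔ : z ∈ stdSimplex ℝ (Fin K))
    (hθk : 0 < θ k) (h : ∀ ℓ, θ ℓ * z k ≤ θ k * z ℓ) : z ∈ subsimplex K k θ := by
  classical
  set t : ℝ := z k / θ k with ht
  set w : Fin K → ℝ := fun ℓ => if ℓ = k then t else z ℓ - t * θ ℓ with hw
  set p : Fin K → (Fin K → ℝ) := fun ℓ => if ℓ = k then θ else vtx K ℓ with hp
  have htθ : t * θ k = z k := div_mul_cancel₀ _ hθk.ne'
  have hw0 : ∀ i ∈ Finset.univ, 0 ≤ w i := by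
    intro i _
    by_cases hi : i = k
    · simp [hw, hi, ht]
      exact div_nonneg (hzΔ.1 k) hθk.le
    · simp only [hw, if_neg hi]
      have := h i
      rw [ht]
      rw [div_mul_eq_mul_div, sub_nonneg, div_le_iff₀ hθk]
      nlinarith [h i]
  have hwsum : ∑ i, w i = 1 := by
    have e : ∀ i, w i = (z i - t * θ i) + (if i = k then t - (z i - t * θ i) else 0) := by
      intro i; by_cases hi : i = k <;> simp [hw, hi]
    rw [Finset.sum_congr rfl (fun i _ => e i), Finset.sum_add_distrib,
      Finset.sum_sub_distrib, ← Finset.mul_sum, hθ.2, hzΔ.2,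
      Finset.sum_ite_eq' Finset.univ k (fun i => t - (z i - t * θ i))]
    simp [htθ]
  have hz' : Finset.univ.centerMass w p = z := by
    rw [Finset.centerMass, hwsum, inv_one, one_smul]
    funext i
    rw [Finset.sum_apply]
    have e : ∀ ℓ : Fin K, (w ℓ • p ℓ) i =
        (if ℓ = k then t * θ i else if ℓ = i then z ℓ - t * θ ℓ else 0) := by
      intro ℓ
      by_cases hℓ : ℓ = k
      · simp [hw, hp, hℓ]
      · rw [if_neg hℓ]
        simp only [hw, hp, if_neg hℓ, Pi.smul_apply, smul_eq_mul, vtx]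
        by_cases hi : ℓ = i
        · rw [if_pos hi, if_pos hi.symm, mul_one]
        · rw [if_neg hi, if_neg (fun hh => hi hh.symm), mul_zero]
    rw [Finset.sum_congr rfl (fun ℓ _ => e ℓ)]
    by_cases hik : i = k
    · have e2 : ∀ ℓ : Fin K, (if ℓ = k then t * θ i else if ℓ = i then z ℓ - t * θ ℓ else 0)
          = (if ℓ = k then t * θ i else 0) := by
        intro ℓ; by_cases hℓ : ℓ = k
        · simp [hℓ]
        · rw [if_neg hℓ, if_neg hℓ, if_neg (by rw [hik]; exact hℓ)]
      rw [Finset.sum_congr rfl (fun ℓ _ => e2 ℓ),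
        Finset.sum_ite_eq' Finset.univ k (fun _ => t * θ i)]
      simp [hik, htθ]
    · have e2 : ∀ ℓ : Fin K, (if ℓ = k then t * θ i else if ℓ = i then z ℓ - t * θ ℓ else 0)
          = (if ℓ = k then t * θ i else 0) + (if ℓ = i then z ℓ - t * θ ℓ else 0) := by
        intro ℓ
        by_cases hℓ : ℓ = k
        · rw [if_pos hℓ, if_pos hℓ, if_neg (by rw [hℓ]; exact Ne.symm hik), add_zero]
        · rw [if_neg hℓ, if_neg hℓ, zero_add]
      rw [Finset.sum_congr rfl (fun ℓ _ => e2 ℓ), Finset.sum_add_distrib,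
        Finset.sum_ite_eq' Finset.univ k (fun _ => t * θ i),
        Finset.sum_ite_eq' Finset.univ i (fun ℓ => z ℓ - t * θ ℓ)]
      simp only [Finset.mem_univ, if_true]
      ring
  rw [← hz']
  apply Finset.centerMass_mem_convexHull _ hw0 (by rw [hwsum]; exact one_pos)
  intro i _
  by_cases hi : i = k
  · simp only [hp, if_pos hi]
    exact Set.mem_insert _ _
  · simp only [hp, if_neg hi]
    exact Set.mem_insert_of_mem _ ⟨i, hi, rfl⟩

def walkSet (K : ℕ) (w : Fin K → Fin K → ℝ) (a b : Fin K) : Set ℝ :=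
  {v : ℝ | ∃ (m : ℕ) (j : Fin (m + 1) → Fin K),
    j 0 = a ∧ j (Fin.last m) = b ∧ Function.Injective j ∧ v = walkWeight K w m j}

lemma minWalk_eq (K : ℕ) (w : Fin K → Fin K → ℝ) (a b : Fin K) :
    minWalk K w a b = sInf (walkSet K w a b) := rfl

section

variable {K : ℕ} {w : Fin K → Fin K → ℝ} {φ : Fin K → ℝ}

lemma fin_telescope : ∀ (m : ℕ) (G : Fin (m+1) → ℝ),
    ∑ i : Fin m, (G i.succ - G i.castSucc) = G (Fin.last m) - G 0 := by
  intro m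
  induction m with
  | zero => intro G; simp
  | succ m ih =>
    intro G
    rw [Fin.sum_univ_castSucc]
    have e : ∀ i : Fin m, G (i.castSucc).succ - G i.castSucc.castSucc
        = (G ∘ Fin.castSucc) i.succ - (G ∘ Fin.castSucc) i.castSucc := by
      intro i
      simp only [Function.comp_apply, Fin.succ_castSucc]
    rw [Finset.sum_congr rfl (fun i _ => e i), ih (G ∘ Fin.castSucc)]
    simp only [Function.comp, Fin.succ_last, Fin.castSucc_zero]
    ring

lemma walk_ge {m : ℕ} {j : Fin (m+1) → Fin K}
    (h : ∀ i : Fin m, φ (j i.succ) - φ (j i.castSucc) ≤ w (j i.castSucc) (j i.succ)) :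
    φ (j (Fin.last m)) - φ (j 0) ≤ walkWeight K w m j := by
  calc φ (j (Fin.last m)) - φ (j 0) = ∑ i : Fin m, (φ (j i.succ) - φ (j i.castSucc)) :=
        (fin_telescope m (φ ∘ j)).symm
    _ ≤ walkWeight K w m j := Finset.sum_le_sum fun i _ => h i

lemma walkSet_nonempty (a b : Fin K) : (walkSet K w a b).Nonempty := by
  by_cases hab : a = b
  · subst hab
    exact ⟨0, 0, fun _ => a, rfl, rfl, fun i1 i2 _ => Fin.ext (by omega), by
      simp [walkWeight]⟩
  · refine ⟨w a b, 1, ![a, b], rfl, rfl, ?_, ?_⟩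
    · intro i1 i2 h
      fin_cases i1 <;> fin_cases i2 <;> simp_all
    · simp [walkWeight]

lemma walkSet_bddBelow (hφ : ∀ a b, φ b - φ a ≤ w a b) (a b : Fin K) :
    BddBelow (walkSet K w a b) := by
  refine ⟨φ b - φ a, ?_⟩
  rintro v ⟨m', j, h0, hl, hinj, rfl⟩
  rw [← h0, ← hl]
  exact walk_ge fun i => hφ _ _

lemma minWalk_le_mem (hφ : ∀ a b, φ b - φ a ≤ w a b) {a b : Fin K} {v : ℝ}
    (hv : v ∈ walkSet K w a b) : minWalk K w a b ≤ v :=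
  csInf_le (walkSet_bddBelow hφ a b) hv

lemma minWalk_ge (hφ : ∀ a b, φ b - φ a ≤ w a b) (a b : Fin K) :
    φ b - φ a ≤ minWalk K w a b :=
  le_csInf (walkSet_nonempty a b) fun v hv => by
    obtain ⟨m', j, h0, hl, hinj, rfl⟩ := hv
    rw [← h0, ← hl]
    exact walk_ge fun i => hφ _ _

lemma minWalk_self (a : Fin K) : minWalk K w a a = 0 := by
  have : walkSet K w a a = {0} := by
    ext v
    constructor
    · rintro ⟨m', j, h0, hl, hinj, rfl⟩
      cases m' with
      | zero => simp [walkWeight]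
      | succ m' =>
        exfalso
        have : (0 : Fin (m' + 2)) = Fin.last (m' + 1) := hinj (h0.trans hl.symm)
        simp [Fin.ext_iff] at this
    · rintro rfl
      exact ⟨0, fun _ => a, rfl, rfl, fun i1 i2 _ => Fin.ext (by omega), by
        simp [walkWeight]⟩
  rw [minWalk_eq, this, csInf_singleton]

end

section

variable {K : ℕ} {w : Fin K → Fin K → ℝ} {φ : Fin K → ℝ}

/-- walkWeight as a range sum of a ℕ-indexed function. -/
lemma walkWeight_eq_range (m : ℕ) (j : Fin (m+1) → Fin K) :
    walkWeight K w m j = ∑ n ∈ Finset.range m,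
      (fun n => if h : n + 1 ≤ m then w (j ⟨n, by omega⟩) (j ⟨n+1, by omega⟩) else 0) n := by
  rw [← Fin.sum_univ_eq_sum_range]
  apply Finset.sum_congr rfl
  intro i _
  have h : (i : ℕ) + 1 ≤ m := i.isLt
  rw [dif_pos h]
  all_goals (congr 1 <;> exact congrArg j (Fin.ext rfl))

lemma minWalk_triangle (hφ : ∀ a b, φ b - φ a ≤ w a b) (a b k : Fin K) :
    minWalk K w a k ≤ w a b + minWalk K w b k := by
  have key : ∀ v ∈ walkSet K w b k, minWalk K w a k ≤ w a b + v := by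
    rintro v ⟨m', j, h0, hl, hinj, rfl⟩
    by_cases ha : a ∈ Set.range j
    · -- truncate: tail from the occurrence of a
      obtain ⟨s, hs⟩ := ha
      have hsm : (s : ℕ) ≤ m' := by omega
      set m2 : ℕ := m' - s.val with hm2
      have hm2' : s.val + m2 = m' := by omega
      set j2 : Fin (m2 + 1) → Fin K := fun i => j ⟨s.val + i.val, by omega⟩ with hj2
      have h20 : j2 0 = a := by
        simp only [hj2, ← hs]
        exact congrArg j (Fin.ext (by simp))
      have h2l : j2 (Fin.last m2) = k := by
        simp only [hj2, ← hl]
        exact congrArg j (Fin.ext (by simp [hm2']))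
      have h2inj : Function.Injective j2 := by
        intro i1 i2 h
        simp only [hj2] at h
        have := hinj h
        rw [Fin.ext_iff] at this ⊢
        simpa using this
      -- prefix walk
      set j1 : Fin (s.val + 1) → Fin K := fun i => j ⟨i.val, by omega⟩ with hj1
      have hpre : φ a - φ b ≤ walkWeight K w s.val j1 := by
        have hge := walk_ge (w := w) (φ := φ) (j := j1) (fun i => hφ _ _)
        have e0 : j1 0 = b := by
          simp only [hj1, ← h0]; exact congrArg j (Fin.ext rfl)
        have el : j1 (Fin.last s.val) = a := by
          simp only [hj1, ← hs]; exact congrArg j (Fin.ext rfl)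
        rw [e0, el] at hge
        exact hge
      -- splitting
      have hsplit : walkWeight K w m' j = walkWeight K w s.val j1 + walkWeight K w m2 j2 := by
        rw [walkWeight_eq_range m' j, Finset.range_eq_Ico,
          ← Finset.sum_Ico_consecutive _ (Nat.zero_le s.val) hsm]
        have e1 : ∑ n ∈ Finset.Ico 0 s.val,
            (fun n => if h : n + 1 ≤ m' then w (j ⟨n, by omega⟩) (j ⟨n+1, by omega⟩) else 0) n
            = walkWeight K w s.val j1 := by
          rw [← Finset.range_eq_Ico, walkWeight_eq_range s.val j1]
          apply Finset.sum_congr rfl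
          intro n hn
          rw [Finset.mem_range] at hn
          beta_reduce
          rw [dif_pos (by omega : n + 1 ≤ m'), dif_pos (by omega : n + 1 ≤ s.val)]
        have e2 : ∑ n ∈ Finset.Ico s.val m',
            (fun n => if h : n + 1 ≤ m' then w (j ⟨n, by omega⟩) (j ⟨n+1, by omega⟩) else 0) n
            = walkWeight K w m2 j2 := by
          rw [Finset.sum_Ico_eq_sum_range, walkWeight_eq_range m2 j2]
          apply Finset.sum_congr (by rw [hm2])
          intro n hn
          rw [Finset.mem_range, hm2] at hn
          beta_reduce
          rw [dif_pos (by omega : s.val + n + 1 ≤ m'), dif_pos (by omega : n + 1 ≤ m2)]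
          all_goals (simp only [hj2]; congr 1 <;> exact congrArg j (Fin.ext rfl))
        rw [e1, e2]
      have hmem : walkWeight K w m2 j2 ∈ walkSet K w a k := ⟨m2, j2, h20, h2l, h2inj, rfl⟩
      have h1 := minWalk_le_mem hφ hmem
      have h2 := hφ a b
      linarith
    · -- prepend the edge a → b
      set j3 : Fin (m' + 2) → Fin K := Fin.cons a j with hj3
      have h30 : j3 0 = a := Fin.cons_zero _ _
      have h3l : j3 (Fin.last (m' + 1)) = k := by
        rw [← Fin.succ_last, hj3, Fin.cons_succ]; exact hl
      have h3inj : Function.Injective j3 :=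
        Fin.cons_injective_of_injective ha hinj
      have h3w : walkWeight K w (m' + 1) j3 = w a b + walkWeight K w m' j := by
        rw [walkWeight, Fin.sum_univ_succ]
        congr 1
        simp only [hj3, Fin.castSucc_zero, Fin.cons_zero, Fin.succ_zero_eq_one]
        rw [show (1 : Fin (m' + 2)) = (0 : Fin (m' + 1)).succ from rfl, Fin.cons_succ, h0]
      have hmem : w a b + walkWeight K w m' j ∈ walkSet K w a k :=
        ⟨m' + 1, j3, h30, h3l, h3inj, h3w.symm⟩
      exact minWalk_le_mem hφ hmem
  rw [minWalk_eq K w b k]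
  have hne := walkSet_nonempty (w := w) b k
  by_contra hcon
  push_neg at hcon
  have hlt : sInf (walkSet K w b k) < minWalk K w a k - w a b := by linarith
  obtain ⟨v, hv, hvlt⟩ := exists_lt_of_csInf_lt hne hlt
  have := key v hv
  linarith

end


theorem stmt16 (K N : ℕ) (hK : 2 ≤ K) (hN : 1 ≤ N)
    (x : Fin N → Fin K) (hx : ∀ k, ∃ n, x n = k)
    (u : Fin N → Fin K → ℝ) (hu : ∀ n, u n ∈ stdSimplex ℝ (Fin K))
    (hupos : ∀ n ℓ, 0 < u n ℓ)
    (hR : ∃ θ ∈ stdSimplex ℝ (Fin K), ∀ n, u n ∈ subsimplex K (x n) θ)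
    (η : Fin K → Fin K → ℝ)
    (hη : ∀ k ℓ, IsLeast {v : ℝ | ∃ n, x n = k ∧ v = u n ℓ / u n k} (η k ℓ))
    (k : Fin K) (m : Fin K → ℝ)
    (hm : ∀ ℓ, m ℓ = minWalk K (fun a b => Real.log (η a b)) ℓ k)
    (θstar : Fin K → ℝ)
    (hθstar : ∀ ℓ, θstar ℓ = Real.exp (-(m ℓ)) / ∑ ℓ' : Fin K, Real.exp (-(m ℓ')))
    (v : Fin N → Fin K → ℝ)
    (hv : ∀ n, x n = k → v n ∈ stdSimplex ℝ (Fin K))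
    (hvpos : ∀ n, x n = k → ∀ ℓ, 0 < v n ℓ)
    (u' : Fin N → Fin K → ℝ)
    (hu' : ∀ n, u' n = if x n = k then v n else u n) :
    (∃ θ ∈ stdSimplex ℝ (Fin K), ∀ n, u' n ∈ subsimplex K (x n) θ) ↔
      ∀ n, x n = k → v n ∈ subsimplex K k θstar := by
  classical
  set w : Fin K → Fin K → ℝ := fun a b => Real.log (η a b) with hwdef
  -- basic facts about η
  have hηmem : ∀ a b : Fin K, ∃ n, x n = a ∧ η a b = u n b / u n a := fun a b => (hη a b).1
  have hηpos : ∀ a b : Fin K, 0 < η a b := by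
    intro a b
    obtain ⟨n, _, he⟩ := hηmem a b
    rw [he]
    exact div_pos (hupos n b) (hupos n a)
  have hηle : ∀ (a b : Fin K) (n : Fin N), x n = a → η a b ≤ u n b / u n a :=
    fun a b n hn => (hη a b).2 ⟨n, hn, rfl⟩
  -- the potential from hR
  obtain ⟨θ0, hθ0Δ, hθ0⟩ := hR
  have hθ0pos : ∀ a, 0 < θ0 a := by
    intro a
    obtain ⟨n, hn⟩ := hx a
    have := subsimplex_le hθ0Δ (hu n) (hθ0 n)
    rw [hn] at this
    exact lt_of_lt_of_le (hupos n a) this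
  have hφ : ∀ a b, Real.log (θ0 b) - Real.log (θ0 a) ≤ w a b := by
    intro a b
    obtain ⟨n, hn, he⟩ := hηmem a b
    have h1 : θ0 b * u n a ≤ θ0 a * u n b := by
      have := subsimplex_ineq hθ0Δ (hθ0 n) b
      rw [hn] at this
      exact this
    have h2 : θ0 b / θ0 a ≤ η a b := by
      rw [he, div_le_div_iff₀ (hθ0pos a) (hupos n a)]
      nlinarith [h1]
    calc Real.log (θ0 b) - Real.log (θ0 a) = Real.log (θ0 b / θ0 a) :=
          (Real.log_div (hθ0pos b).ne' (hθ0pos a).ne').symm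
      _ ≤ Real.log (η a b) := Real.log_le_log (div_pos (hθ0pos b) (hθ0pos a)) h2
      _ = w a b := rfl
  -- properties of m
  have hmk : m k = 0 := by rw [hm k]; exact minWalk_self k
  have htri : ∀ a b, m a ≤ w a b + m b := by
    intro a b
    rw [hm a, hm b]
    exact minWalk_triangle hφ a b k
  -- properties of θstar
  set Z : ℝ := ∑ ℓ' : Fin K, Real.exp (-(m ℓ')) with hZ
  have hZpos : 0 < Z := Finset.sum_pos (fun ℓ' _ => Real.exp_pos _) ⟨k, Finset.mem_univ k⟩
  have hθstarpos : ∀ ℓ, 0 < θstar ℓ := by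
    intro ℓ
    rw [hθstar ℓ]
    exact div_pos (Real.exp_pos _) hZpos
  have hθstarΔ : θstar ∈ stdSimplex ℝ (Fin K) := by
    constructor
    · exact fun ℓ => (hθstarpos ℓ).le
    · have : ∑ ℓ : Fin K, θstar ℓ = ∑ ℓ : Fin K, Real.exp (-(m ℓ)) / Z :=
        Finset.sum_congr rfl fun ℓ _ => hθstar ℓ
      rw [this, ← Finset.sum_div, ← hZ, div_self hZpos.ne']
  have hθstark : θstar k = 1 / Z := by
    rw [hθstar k, hmk, neg_zero, Real.exp_zero]
  constructor
  · -- forward direction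
    rintro ⟨θ, hθΔ, hθall⟩ n hn
    have hu'Δ : ∀ n', u' n' ∈ stdSimplex ℝ (Fin K) := by
      intro n'
      rw [hu' n']
      by_cases h : x n' = k
      · rw [if_pos h]; exact hv n' h
      · rw [if_neg h]; exact hu n'
    have hu'pos : ∀ n' ℓ, 0 < u' n' ℓ := by
      intro n' ℓ
      rw [hu' n']
      by_cases h : x n' = k
      · rw [if_pos h]; exact hvpos n' h ℓ
      · rw [if_neg h]; exact hupos n' ℓ
    have hθpos : ∀ a, 0 < θ a := by
      intro a
      obtain ⟨n', hn'⟩ := hx a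
      have := subsimplex_le hθΔ (hu'Δ n') (hθall n')
      rw [hn'] at this
      exact lt_of_lt_of_le (hu'pos n' a) this
    have hedge : ∀ a b, a ≠ k → Real.log (θ b) - Real.log (θ a) ≤ w a b := by
      intro a b hak
      obtain ⟨n', hn', he⟩ := hηmem a b
      have hun' : u' n' = u n' := by rw [hu' n', if_neg (by rw [hn']; exact hak)]
      have h1 : θ b * u n' a ≤ θ a * u n' b := by
        have := subsimplex_ineq hθΔ (hθall n') b
        rw [hn', hun'] at this
        exact this
      have h2 : θ b / θ a ≤ η a b := by
        rw [he, div_le_div_iff₀ (hθpos a) (hupos n' a)]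
        nlinarith [h1]
      calc Real.log (θ b) - Real.log (θ a) = Real.log (θ b / θ a) :=
            (Real.log_div (hθpos b).ne' (hθpos a).ne').symm
        _ ≤ Real.log (η a b) := Real.log_le_log (div_pos (hθpos b) (hθpos a)) h2
        _ = w a b := rfl
    have key : ∀ ℓ, Real.log (θ k) - Real.log (θ ℓ) ≤ m ℓ := by
      intro ℓ
      rw [hm ℓ]
      apply le_csInf (walkSet_nonempty ℓ k)
      rintro val ⟨m', jw, h0, hl, hinj, rfl⟩
      cases m' with
      | zero =>
        have hlk : ℓ = k := by rw [← h0, ← hl]; rfl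
        subst hlk
        simp [walkWeight]
      | succ m'' =>
        have := walk_ge (w := w) (φ := fun a => Real.log (θ a)) (j := jw) ?_
        · rw [h0, hl] at this; exact this
        · intro i
          apply hedge
          intro hcon
          have : jw i.castSucc = jw (Fin.last (m'' + 1)) := by rw [hcon, hl]
          have := hinj this
          exact absurd this (Fin.castSucc_lt_last i).ne
    -- conclude : v n ∈ subsimplex K k θstar
    have hvn : v n ∈ subsimplex K (x n) θ := by
      have := hθall n
      rw [hu' n, if_pos hn] at this
      exact this
    rw [hn] at hvn
    apply mem_subsimplex hθstarΔ (hv n hn) (hθstark ▸ div_pos one_pos hZpos)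
    intro ℓ
    have hineq1 : θ ℓ * v n k ≤ θ k * v n ℓ := subsimplex_ineq hθΔ hvn ℓ
    have hineq2 : Real.exp (-(m ℓ)) ≤ θ ℓ / θ k := by
      have h3 : -(m ℓ) ≤ Real.log (θ ℓ / θ k) := by
        rw [Real.log_div (hθpos ℓ).ne' (hθpos k).ne']
        have := key ℓ
        linarith
      calc Real.exp (-(m ℓ)) ≤ Real.exp (Real.log (θ ℓ / θ k)) := Real.exp_le_exp.mpr h3
        _ = θ ℓ / θ k := Real.exp_log (div_pos (hθpos ℓ) (hθpos k))
    rw [hθstar ℓ, hθstark]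
    rw [div_mul_eq_mul_div, one_div, inv_mul_eq_div, div_le_div_iff₀ hZpos hZpos]
    have h4 : Real.exp (-(m ℓ)) * v n k ≤ (θ ℓ / θ k) * v n k :=
      mul_le_mul_of_nonneg_right hineq2 ((hv n hn).1 k)
    have h5 : (θ ℓ / θ k) * v n k ≤ v n ℓ := by
      rw [div_mul_eq_mul_div, div_le_iff₀ (hθpos k)]
      nlinarith [hineq1]
    nlinarith [h4, h5, hZpos]
  · -- backward direction
    intro h
    refine ⟨θstar, hθstarΔ, ?_⟩
    intro n
    rw [hu' n]
    by_cases hxn : x n = k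
    · rw [if_pos hxn, hxn]
      exact h n hxn
    · rw [if_neg hxn]
      apply mem_subsimplex hθstarΔ (hu n) (hθstarpos (x n))
      intro ℓ
      set a := x n with ha
      have h1 : Real.exp (-(m ℓ)) ≤ η a ℓ * Real.exp (-(m a)) := by
        have h2 : -(m ℓ) ≤ Real.log (η a ℓ) + -(m a) := by
          have := htri a ℓ
          simp only [hwdef] at this
          linarith
        calc Real.exp (-(m ℓ)) ≤ Real.exp (Real.log (η a ℓ) + -(m a)) := Real.exp_le_exp.mpr h2
          _ = η a ℓ * Real.exp (-(m a)) := by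
            rw [Real.exp_add, Real.exp_log (hηpos a ℓ)]
      have h2 : η a ℓ * u n a ≤ u n ℓ := by
        have hle := hηle a ℓ n ha.symm
        rw [le_div_iff₀ (hupos n a)] at hle
        exact hle
      rw [hθstar ℓ, hθstar a]
      rw [div_mul_eq_mul_div, div_mul_eq_mul_div, div_le_div_iff₀ hZpos hZpos]
      have h3 : Real.exp (-(m ℓ)) * u n a ≤ η a ℓ * Real.exp (-(m a)) * u n a :=
        mul_le_mul_of_nonneg_right h1 (hupos n a).le
      have h4 : η a ℓ * Real.exp (-(m a)) * u n a ≤ Real.exp (-(m a)) * u n ℓ := by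
        nlinarith [h2, Real.exp_pos (-(m a))]
      nlinarith [h3, h4, hZpos]
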